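/- Let Y be a finite poset, k a commutative ring, and x, y ∈ Y. Then the k-module Hom_{F_{Y,k}}(I_x, I_y) of natural transformations from I_x to I_y is isomorphic to k if y ≤ x, and is zero otherwise. -/

import Mathlib

open CategoryTheory
open scoped Classical
namespace PaperInterval
noncomputable def charFunctor (k : Type) [CommRing k] (P : Type) [PartialOrder P] (S : P → Prop)
    (hS : ∀ ⦃x y z : P⦄, x ≤ y → y ≤ z → S x → S z → S y) :
    P ⥤ ModuleCat.{0} k where
  obj x := ModuleCat.of k (PLift (S x) → k)
  map {x x'} _ := ModuleCat.ofHom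
    { toFun := fun g _ => if h : S x then g ⟨h⟩ else 0
      map_add' := by intro g₁ g₂; funext h'; by_cases h : S x <;> simp [h]
      map_smul' := by intro r g; funext h'; by_cases h : S x <;> simp [h] }
  map_id x := by
    apply ModuleCat.hom_ext; apply LinearMap.ext; intro g; funext h'
    by_cases h : S x
    · simp [dif_pos h]
    · exact absurd h'.down h
  map_comp {x y z} f g := by
    apply ModuleCat.hom_ext; apply LinearMap.ext; intro u; funext h'
    by_cases hx : S x
    · have hy : S y := hS (leOfHom f) (leOfHom g) hx h'.down
      simp [dif_pos hx, dif_pos hy]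
    · by_cases hy : S y <;>
        simp [dif_neg hx, hy]

noncomputable def Mab (k : Type) [CommRing k] (X : Type) [PartialOrder X] (a b : X) :
    X ⥤ ModuleCat.{0} k :=
  charFunctor k X (fun x => a ≤ x ∧ x ≤ b)
    (fun _ _ _ h1 h2 hx hz => ⟨hx.1.trans h1, h2.trans hz.2⟩)

noncomputable def Pfun (k : Type) [CommRing k] (P : Type) [PartialOrder P] (p : P) :
    P ⥤ ModuleCat.{0} k :=
  charFunctor k P (fun z => p ≤ z) (fun _ _ _ h1 _ hx _ => hx.trans h1)

noncomputable def Ifun (k : Type) [CommRing k] (P : Type) [PartialOrder P] (p : P) :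
    P ⥤ ModuleCat.{0} k :=
  charFunctor k P (fun z => z ≤ p) (fun _ _ _ _ h2 _ hz => h2.trans hz)

section aux
variable (k : Type) [CommRing k] (P : Type) [PartialOrder P] (p : P)

lemma Ifun_map_apply {z z' : P} (f : z ⟶ z') (g : (Ifun k P p).obj z)
    (h' : PLift (z' ≤ p)) :
    (Ifun k P p).map f g h' = if h : z ≤ p then g ⟨h⟩ else 0 := rfl

lemma key {x y : P} (η : Ifun k P x ⟶ Ifun k P y) {z : P} (g : (Ifun k P x).obj z)
    (h : PLift (z ≤ y)) :
    η.app z g h = η.app y ((Ifun k P x).map (homOfLE h.down) g) ⟨le_refl y⟩ := by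
  have h1 := congrFun (congrFun (congrArg (fun (L : (Ifun k P x).obj z ⟶ (Ifun k P y).obj y) =>
    (L : (Ifun k P x).obj z → (Ifun k P y).obj y)) (η.naturality (homOfLE h.down))) g) ⟨le_refl y⟩
  simp only [ModuleCat.hom_comp, LinearMap.comp_apply] at h1
  rw [h1, Ifun_map_apply, dif_pos h.down]

noncomputable def psi {x y : P} (hyx : y ≤ x) (c : k) : Ifun k P x ⟶ Ifun k P y where
  app z := ModuleCat.ofHom
    { toFun := fun g h => c * g ⟨h.down.trans hyx⟩
      map_add' := by intro g1 g2; funext h; simp [mul_add]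
      map_smul' := by intro r g; funext h; simp [mul_left_comm] }
  naturality := by
    intro z z' f
    apply ModuleCat.hom_ext; apply LinearMap.ext; intro g; funext h'
    have hzy : z ≤ y := (leOfHom f).trans h'.down
    show c * ((Ifun k P x).map f g) ⟨h'.down.trans hyx⟩
      = (Ifun k P y).map f (fun h => c * g ⟨h.down.trans hyx⟩) h'
    show (c * if h : z ≤ x then g ⟨h⟩ else 0) = (if h : z ≤ y then c * g ⟨h.trans hyx⟩ else 0)
    rw [dif_pos (hzy.trans hyx), dif_pos hzy]

end aux

/-- For a finite poset `Y`, a commutative ring `k` and `x y ∈ Y`,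
the `k`-module `Hom_{F_{Y,k}}(I_x, I_y)` is isomorphic to `k` if `y ≤ x` and is zero
otherwise. -/
theorem statement2 (Y : Type) [PartialOrder Y] [Fintype Y] (k : Type) [CommRing k]
    (x y : Y) :
    (y ≤ x → Nonempty ((Ifun k Y x ⟶ Ifun k Y y) ≃ₗ[k] k)) ∧
    (¬ y ≤ x → Subsingleton (Ifun k Y x ⟶ Ifun k Y y)) := by
  constructor
  · intro hyx
    refine ⟨{ toFun := fun η => η.app y (fun _ => 1) ⟨le_refl y⟩
              map_add' := by intro a b; rfl
              map_smul' := by intro c a; rfl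
              invFun := fun c => psi k Y hyx c
              left_inv := ?_
              right_inv := ?_ }⟩
    · intro η
      apply NatTrans.ext; funext z
      apply ModuleCat.hom_ext; apply LinearMap.ext; intro g; funext h
      rw [key k Y η g h]
      have he : (Ifun k Y x).map (homOfLE h.down) g
          = (g ⟨h.down.trans hyx⟩ : k) • (fun _ => (1 : k) : PLift (y ≤ x) → k) := by
        funext h'
        show (if hh : z ≤ x then g ⟨hh⟩ else 0) = g ⟨h.down.trans hyx⟩ * 1
        rw [dif_pos (h.down.trans hyx), mul_one]
      rw [he]; erw [map_smul]
      show η.app y (fun _ => 1) ⟨le_refl y⟩ * g ⟨h.down.trans hyx⟩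
          = (g ⟨h.down.trans hyx⟩ • η.app y fun _ => 1) ⟨le_refl y⟩
      exact mul_comm _ _
    · intro c
      show c * (1 : k) = c
      rw [mul_one]
  · intro hne
    refine ⟨fun a b => ?_⟩
    apply NatTrans.ext; funext z
    apply ModuleCat.hom_ext; apply LinearMap.ext; intro g; funext h
    rw [key k Y a g h, key k Y b g h]
    have hz : (Ifun k Y x).map (homOfLE h.down) g = 0 := by
      funext h'; exact absurd h'.down hne
    rw [hz, map_zero, map_zero]


end PaperInterval
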